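/- arXiv:1708.04705 — 2 statements merged into one kernel-verified Lean document; each statement's English description precedes it below -/
import Mathlib

section
/- (Lemma 7.) Let (Z_i)_{i≥1} be zero-mean square-integrable real random variables with 𝔼Z_i² ≤ b for some b > 0 and 𝔼[Z_i Z_j] = 0 for i ≠ j, and let Y₁,…,Y_k be zero-mean square-integrable random variables. Let P(Z_i | Y) denote the orthogonal projection in L² of Z_i onto the linear span of Y₁,…,Y_k. Then liminf_{n→∞} (1/n) Σ_{i=1}^n ( 𝔼(Z_i − P(Z_i | Y))² − 𝔼Z_i² ) ≥ 0. -/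
open MeasureTheory Filter Matrix
open scoped InnerProductSpace

noncomputable section

-- Bessel-type inequality for an orthogonal (not necessarily normalized) family
lemma bessel_aux {E : Type*} [NormedAddCommGroup E] [InnerProductSpace ℝ E]
    (b : ℝ) (z : ℕ → E) (horth : ∀ i j, i ≠ j → ⟪z i, z j⟫_ℝ = 0)
    (hb : ∀ i, ‖z i‖ ^ 2 ≤ b) (x : E) (n : ℕ) :
    ∑ i ∈ Finset.range n, ⟪z i, x⟫_ℝ ^ 2 ≤ b * ‖x‖ ^ 2 := by
  have hb0 : 0 ≤ b := le_trans (sq_nonneg _) (hb 0)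
  set c : ℕ → ℝ := fun i => ⟪z i, x⟫_ℝ / ‖z i‖ ^ 2 with hc
  set T : ℝ := ∑ i ∈ Finset.range n, ⟪z i, x⟫_ℝ ^ 2 / ‖z i‖ ^ 2 with hT
  have hzero : ∀ i, ‖z i‖ = 0 → ⟪z i, x⟫_ℝ = 0 := by
    intro i h; rw [norm_eq_zero] at h; rw [h, inner_zero_left]
  set v : E := ∑ i ∈ Finset.range n, c i • z i with hv
  have hxv : ⟪x, v⟫_ℝ = T := by
    rw [hv, inner_sum, hT]
    refine Finset.sum_congr rfl fun i _ => ?_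
    rw [real_inner_smul_right, real_inner_comm]
    by_cases h : ‖z i‖ = 0
    · simp [hc, hzero i h, h]
    · rw [hc]; field_simp
  have hvz : ∀ j ∈ Finset.range n, ⟪v, z j⟫_ℝ = c j * ‖z j‖ ^ 2 := by
    intro j hj
    rw [hv, sum_inner]
    rw [Finset.sum_eq_single j]
    · rw [real_inner_smul_left, real_inner_self_eq_norm_sq]
    · intro i _ hij
      rw [real_inner_smul_left, horth i j hij, mul_zero]
    · intro h; exact absurd hj h
  have hvv : ⟪v, v⟫_ℝ = T := by
    conv_lhs => rw [hv]
    rw [inner_sum, hT]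
    refine Finset.sum_congr rfl fun j hjm => ?_
    rw [real_inner_smul_right, hvz j hjm]
    by_cases h : ‖z j‖ = 0
    · simp [hc, hzero j h, h]
    · rw [hc]; field_simp
  have hTle : T ≤ ‖x‖ ^ 2 := by
    have h0 : (0:ℝ) ≤ ‖x - v‖ ^ 2 := sq_nonneg _
    rw [norm_sub_sq_real, ← real_inner_self_eq_norm_sq v, hvv, hxv] at h0
    linarith
  have hTnn : ∀ i, (0:ℝ) ≤ ⟪z i, x⟫_ℝ ^ 2 / ‖z i‖ ^ 2 :=
    fun i => div_nonneg (sq_nonneg _) (sq_nonneg _)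
  calc ∑ i ∈ Finset.range n, ⟪z i, x⟫_ℝ ^ 2
      = ∑ i ∈ Finset.range n, ‖z i‖ ^ 2 * (⟪z i, x⟫_ℝ ^ 2 / ‖z i‖ ^ 2) := by
        refine Finset.sum_congr rfl fun i _ => ?_
        by_cases h : ‖z i‖ = 0
        · simp [hzero i h, h]
        · field_simp
    _ ≤ ∑ i ∈ Finset.range n, b * (⟪z i, x⟫_ℝ ^ 2 / ‖z i‖ ^ 2) := by
        refine Finset.sum_le_sum fun i _ => ?_
        exact mul_le_mul_of_nonneg_right (hb i) (hTnn i)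
    _ = b * T := by rw [hT, Finset.mul_sum]
    _ ≤ b * ‖x‖ ^ 2 := mul_le_mul_of_nonneg_left hTle hb0

-- coeFn of a finite sum in Lp
lemma coeFn_finset_sum {α ι : Type*} [MeasurableSpace α] {μ : Measure α}
    {q : ENNReal} (s : Finset ι) (f : ι → Lp ℝ q μ) :
    ⇑(∑ i ∈ s, f i) =ᵐ[μ] fun ω => ∑ i ∈ s, f i ω := by
  classical
  induction s using Finset.induction_on with
  | empty => simp only [Finset.sum_empty]; exact Lp.coeFn_zero _ _ _
  | @insert a s ha ih =>
    rw [Finset.sum_insert ha]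
    refine (Lp.coeFn_add _ _).trans ?_
    filter_upwards [ih] with ω hω
    simp only [Pi.add_apply, hω, Finset.sum_insert ha]

theorem stmt11 {Ω : Type*} [MeasurableSpace Ω] (μ : Measure Ω) [IsProbabilityMeasure μ]
    (b : ℝ) (hb : 0 < b) (k : ℕ) (Z : ℕ → Ω → ℝ) (Y : Fin k → Ω → ℝ)
    (hZ : ∀ i, MemLp (Z i) 2 μ) (hY : ∀ j, MemLp (Y j) 2 μ)
    (hZmean : ∀ i, ∫ ω, Z i ω ∂μ = 0) (hYmean : ∀ j, ∫ ω, Y j ω ∂μ = 0)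
    (hZb : ∀ i, ∫ ω, Z i ω ^ 2 ∂μ ≤ b)
    (horth : ∀ i j, i ≠ j → ∫ ω, Z i ω * Z j ω ∂μ = 0)
    (P : ℕ → Ω → ℝ)
    (hPspan : ∀ i, ∃ c : Fin k → ℝ, P i = fun ω => ∑ j, c j * Y j ω)
    (hPmin : ∀ i (c : Fin k → ℝ),
      ∫ ω, (Z i ω - P i ω) ^ 2 ∂μ ≤ ∫ ω, (Z i ω - ∑ j, c j * Y j ω) ^ 2 ∂μ) :
    0 ≤ liminf (fun n : ℕ => (n : ℝ)⁻¹ * ∑ i ∈ Finset.range n,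
        ((∫ ω, (Z i ω - P i ω) ^ 2 ∂μ) - ∫ ω, Z i ω ^ 2 ∂μ)) atTop := by
  classical
  -- move to L²
  set z : ℕ → Lp ℝ 2 μ := fun i => (hZ i).toLp (Z i) with hzdef
  set y : Fin k → Lp ℝ 2 μ := fun j => (hY j).toLp (Y j) with hydef
  choose c hc using hPspan
  set p : ℕ → Lp ℝ 2 μ := fun i => ∑ j, c i j • y j with hpdef
  set S : Submodule ℝ (Lp ℝ 2 μ) := Submodule.span ℝ (Set.range y) with hSdef
  haveI : FiniteDimensional ℝ S := FiniteDimensional.span_of_finite ℝ (Set.finite_range y)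
  have hpS : ∀ i, p i ∈ S := fun i =>
    Submodule.sum_mem _ fun j _ =>
      Submodule.smul_mem _ _ (Submodule.subset_span ⟨j, rfl⟩)
  -- a.e. identifications
  have hZae : ∀ i, ⇑(z i) =ᵐ[μ] Z i := fun i => (hZ i).coeFn_toLp
  have hYae : ∀ j, ⇑(y j) =ᵐ[μ] Y j := fun j => (hY j).coeFn_toLp
  have hLin : ∀ d : Fin k → ℝ,
      ⇑(∑ j, d j • y j) =ᵐ[μ] fun ω => ∑ j, d j * Y j ω := by
    intro d
    refine (coeFn_finset_sum _ _).trans ?_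
    have h : ∀ j : Fin k, ⇑(d j • y j) =ᵐ[μ] fun ω => d j * Y j ω := by
      intro j
      filter_upwards [Lp.coeFn_smul (d j) (y j), hYae j] with ω h1 h2
      simp [h1, h2]
    have h2 := eventually_countable_forall.mpr h
    filter_upwards [h2] with ω hω
    exact Finset.sum_congr rfl fun j _ => hω j
  have hPae : ∀ i, ⇑(p i) =ᵐ[μ] P i := by
    intro i
    have := hLin (c i)
    rw [← hc i] at this
    exact this
  -- integrals as norms / inner products
  have hinner : ∀ f g : Lp ℝ 2 μ, ∫ ω, f ω * g ω ∂μ = ⟪f, g⟫_ℝ := by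
    intro f g
    rw [L2.inner_def]
    refine integral_congr_ae (Eventually.of_forall fun ω => ?_)
    simp [RCLike.inner_apply, mul_comm]
  have hnorm : ∀ f : Lp ℝ 2 μ, ∫ ω, f ω ^ 2 ∂μ = ‖f‖ ^ 2 := by
    intro f
    rw [← real_inner_self_eq_norm_sq, ← hinner f f]
    refine integral_congr_ae (Eventually.of_forall fun ω => ?_)
    simp [sq]
  have hA : ∀ i, ∫ ω, (Z i ω - P i ω) ^ 2 ∂μ = ‖z i - p i‖ ^ 2 := by
    intro i
    rw [← hnorm (z i - p i)]
    refine integral_congr_ae ?_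
    filter_upwards [hZae i, hPae i, Lp.coeFn_sub (z i) (p i)] with ω h1 h2 h3
    rw [h3, Pi.sub_apply, h1, h2]
  have hB : ∀ i, ∫ ω, Z i ω ^ 2 ∂μ = ‖z i‖ ^ 2 := by
    intro i
    rw [← hnorm (z i)]
    refine integral_congr_ae ?_
    filter_upwards [hZae i] with ω h1
    rw [h1]
  have hZorth : ∀ i j, i ≠ j → ⟪z i, z j⟫_ℝ = 0 := by
    intro i j hij
    rw [← hinner, ← horth i j hij]
    refine integral_congr_ae ?_
    filter_upwards [hZae i, hZae j] with ω h1 h2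
    rw [h1, h2]
  have hZb' : ∀ i, ‖z i‖ ^ 2 ≤ b := fun i => (hB i) ▸ hZb i
  -- minimality
  have hmin : ∀ i, ∀ w ∈ S, ‖z i - p i‖ ≤ ‖z i - w‖ := by
    intro i w hw
    obtain ⟨d, rfl⟩ := (Submodule.mem_span_range_iff_exists_fun ℝ).mp hw
    have h2 : ∫ ω, (Z i ω - ∑ j, d j * Y j ω) ^ 2 ∂μ = ‖z i - ∑ j, d j • y j‖ ^ 2 := by
      rw [← hnorm (z i - ∑ j, d j • y j)]
      refine integral_congr_ae ?_
      filter_upwards [hZae i, hLin d, Lp.coeFn_sub (z i) (∑ j, d j • y j)] with ω h1 h2 h3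
      rw [h3, Pi.sub_apply, h1, h2]
    have h3 := hPmin i d
    rw [hA i, h2] at h3
    exact (abs_le_of_sq_le_sq' h3 (norm_nonneg _)).2
  have hiInf : ∀ i, ‖z i - p i‖ = ⨅ w : S, ‖z i - w‖ := by
    intro i
    refine le_antisymm (le_ciInf fun w => hmin i w w.2) ?_
    exact ciInf_le ⟨0, by rintro r ⟨w, rfl⟩; exact norm_nonneg _⟩ (⟨p i, hpS i⟩ : S)
  have horthS : ∀ i, ∀ w ∈ S, ⟪z i - p i, w⟫_ℝ = 0 := fun i =>
    (Submodule.norm_eq_iInf_iff_real_inner_eq_zero S (hpS i)).1 (hiInf i)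
  have hPyth : ∀ i, ‖z i - p i‖ ^ 2 - ‖z i‖ ^ 2 = -‖p i‖ ^ 2 := by
    intro i
    have h := horthS i (p i) (hpS i)
    have h2 : ‖z i‖ ^ 2 = ‖(z i - p i) + p i‖ ^ 2 := by rw [sub_add_cancel]
    rw [norm_add_sq_real, h] at h2
    linarith
  -- orthonormal basis of S
  set e := stdOrthonormalBasis ℝ S with hedef
  have hnormS : ∀ m, ‖(e m : Lp ℝ 2 μ)‖ = 1 := by
    intro m
    rw [Submodule.norm_coe]
    exact e.orthonormal.1 m
  have hnormp : ∀ i, ‖p i‖ ^ 2 = ∑ m, ⟪(e m : Lp ℝ 2 μ), z i⟫_ℝ ^ 2 := by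
    intro i
    set q : S := ⟨p i, hpS i⟩ with hq
    have h1 : ‖p i‖ = ‖q‖ := rfl
    have h3 : ∀ m, ⟪e m, q⟫_ℝ = ⟪(e m : Lp ℝ 2 μ), z i⟫_ℝ := by
      intro m
      rw [Submodule.coe_inner]
      have h4 := horthS i (e m : Lp ℝ 2 μ) (SetLike.coe_mem (e m))
      rw [inner_sub_left] at h4
      have h5 : (↑q : Lp ℝ 2 μ) = p i := rfl
      rw [h5]
      have c1 : ⟪(e m : Lp ℝ 2 μ), p i⟫_ℝ = ⟪p i, (e m : Lp ℝ 2 μ)⟫_ℝ := real_inner_comm _ _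
      have c2 : ⟪(e m : Lp ℝ 2 μ), z i⟫_ℝ = ⟪z i, (e m : Lp ℝ 2 μ)⟫_ℝ := real_inner_comm _ _
      linarith
    have h2 : ‖q‖ ^ 2 = ∑ m, ⟪e m, q⟫_ℝ ^ 2 := by
      rw [← real_inner_self_eq_norm_sq, ← e.sum_inner_mul_inner q q]
      refine Finset.sum_congr rfl fun m _ => ?_
      rw [real_inner_comm q (e m), sq]
    rw [h1, h2]
    exact Finset.sum_congr rfl fun m _ => by rw [h3 m]
  have hdim : (Module.finrank ℝ S : ℝ) ≤ k := by
    have h1 : Module.finrank ℝ S ≤ (Set.range y).toFinset.card := finrank_span_le_card _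
    have h2 : (Set.range y).toFinset.card ≤ k := by
      rw [Set.toFinset_card]
      simpa using Fintype.card_range_le y
    exact_mod_cast h1.trans h2
  have hsum_bound : ∀ n, ∑ i ∈ Finset.range n, ‖p i‖ ^ 2 ≤ b * k := by
    intro n
    calc ∑ i ∈ Finset.range n, ‖p i‖ ^ 2
        = ∑ i ∈ Finset.range n, ∑ m, ⟪(e m : Lp ℝ 2 μ), z i⟫_ℝ ^ 2 :=
          Finset.sum_congr rfl fun i _ => hnormp i
      _ = ∑ m, ∑ i ∈ Finset.range n, ⟪z i, (e m : Lp ℝ 2 μ)⟫_ℝ ^ 2 := by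
          rw [Finset.sum_comm]
          exact Finset.sum_congr rfl fun m _ => Finset.sum_congr rfl fun i _ => by
            rw [real_inner_comm]
      _ ≤ ∑ _m : Fin (Module.finrank ℝ S), b * 1 := by
          refine Finset.sum_le_sum fun m _ => ?_
          have := bessel_aux b z hZorth hZb' (e m : Lp ℝ 2 μ) n
          rwa [hnormS m, one_pow] at this
      _ = (Module.finrank ℝ S : ℝ) * b := by
          rw [Finset.sum_const, Finset.card_univ, Fintype.card_fin, mul_one, nsmul_eq_mul]
      _ ≤ (k : ℝ) * b := mul_le_mul_of_nonneg_right hdim hb.le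
      _ = b * k := by ring
  have hterm : ∀ i, (∫ ω, (Z i ω - P i ω) ^ 2 ∂μ) - ∫ ω, Z i ω ^ 2 ∂μ = -‖p i‖ ^ 2 := by
    intro i; rw [hA i, hB i]; exact hPyth i
  have hbk : (0:ℝ) ≤ b * k := mul_nonneg hb.le (Nat.cast_nonneg k)
  have hg_ge : ∀ n : ℕ, -(b * k) * (n : ℝ)⁻¹ ≤ (n : ℝ)⁻¹ * ∑ i ∈ Finset.range n,
      ((∫ ω, (Z i ω - P i ω) ^ 2 ∂μ) - ∫ ω, Z i ω ^ 2 ∂μ) := by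
    intro n
    have h1 : ∑ i ∈ Finset.range n, ((∫ ω, (Z i ω - P i ω) ^ 2 ∂μ) - ∫ ω, Z i ω ^ 2 ∂μ)
        = -(∑ i ∈ Finset.range n, ‖p i‖ ^ 2) := by
      simp only [hterm]
      exact Finset.sum_neg_distrib _
    rw [h1]
    calc -(b * k) * (n : ℝ)⁻¹
        ≤ -(∑ i ∈ Finset.range n, ‖p i‖ ^ 2) * (n : ℝ)⁻¹ :=
          mul_le_mul_of_nonneg_right (neg_le_neg (hsum_bound n))
            (inv_nonneg.mpr (Nat.cast_nonneg n))
      _ = (n : ℝ)⁻¹ * -(∑ i ∈ Finset.range n, ‖p i‖ ^ 2) := mul_comm _ _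
  have htends : Tendsto (fun n : ℕ => -(b * k) * (n : ℝ)⁻¹) atTop (nhds 0) := by
    have := tendsto_inv_atTop_nhds_zero_nat.const_mul (-(b * k))
    simpa using this
  rw [← htends.liminf_eq]
  refine liminf_le_liminf (Eventually.of_forall hg_ge) ?_ ?_
  · refine isBoundedUnder_of ⟨-(b * k), fun n => ?_⟩
    have h2 : (n : ℝ)⁻¹ ≤ 1 := by
      rcases Nat.eq_zero_or_pos n with h | h
      · simp [h]
      · rw [inv_le_one_iff₀]
        right
        exact_mod_cast h
    have h3 : (0:ℝ) ≤ (n : ℝ)⁻¹ := inv_nonneg.mpr (Nat.cast_nonneg n)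
    nlinarith
  · refine Filter.IsBoundedUnder.isCoboundedUnder_ge (isBoundedUnder_of ⟨0, fun n => ?_⟩)
    have h3 : (0:ℝ) ≤ (n : ℝ)⁻¹ := inv_nonneg.mpr (Nat.cast_nonneg n)
    have h4 : ∑ i ∈ Finset.range n, ((∫ ω, (Z i ω - P i ω) ^ 2 ∂μ) - ∫ ω, Z i ω ^ 2 ∂μ) ≤ 0 := by
      refine Finset.sum_nonpos fun i _ => ?_
      rw [hterm i]
      simp [sq_nonneg]
    exact mul_nonpos_of_nonneg_of_nonpos h3 h4
end
end

section
/- Assume Condition 1 holds and 𝔼‖Z‖² < ∞. Then inf over {a : ‖a‖ = 1} of λ_min(S(a)) is strictly positive, and sup over {a : ‖a‖ = 1} of λ_max(S(a)) is finite. (In particular, for each unit vector a the second-moment matrix S(a) of the vector (1, f_t(a),…,f_{t−k₂}(a)) is positive definite, since Condition 1 rules out any deterministic linear relation between f_t(a),…,f_{t−k₂}(a) and a constant.) -/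
open MeasureTheory Filter

noncomputable section

namespace ODPC

variable {Ω : Type*} [MeasurableSpace Ω]

/-- Frobenius norm of a real matrix. -/
def frob {ι κ : Type*} [Fintype ι] [Fintype κ] (M : Matrix ι κ ℝ) : ℝ :=
  Real.sqrt (∑ i, ∑ j, (M i j) ^ 2)

/-- Smallest eigenvalue of a symmetric real matrix, via the Rayleigh quotient. -/
def lambdaMin {n : ℕ} (M : Matrix (Fin n) (Fin n) ℝ) : ℝ :=
  ⨅ x : { x : EuclideanSpace ℝ (Fin n) // ‖x‖ = 1 }, ∑ i, ∑ j, x.1 i * M i j * x.1 j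

/-- Largest eigenvalue of a symmetric real matrix, via the Rayleigh quotient. -/
def lambdaMax {n : ℕ} (M : Matrix (Fin n) (Fin n) ℝ) : ℝ :=
  ⨆ x : { x : EuclideanSpace ℝ (Fin n) // ‖x‖ = 1 }, ∑ i, ∑ j, x.1 i * M i j * x.1 j

variable (m k₁ k₂ : ℕ)

/-- The stationary process `z_t = Z ∘ τ^t`. -/
def zproc (Z : Ω → EuclideanSpace ℝ (Fin m)) (τ : Ω → Ω) (t : ℕ) (ω : Ω) :
    EuclideanSpace ℝ (Fin m) := Z (τ^[t] ω)

/-- The one-sided dynamic principal component `f_t(a) = a'x_t`,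
where `x_t = (z_t', …, z_{t-k₁}')`. -/
def comp (Z : Ω → EuclideanSpace ℝ (Fin m)) (τ : Ω → Ω)
    (a : EuclideanSpace ℝ (Fin (k₁ + 1) × Fin m)) (t : ℕ) (ω : Ω) : ℝ :=
  ∑ h : Fin (k₁ + 1), ∑ j : Fin m, a (h, j) * zproc m Z τ (t - h.1) ω j

/-- Reconstruction `z_t^R(a,D)`: the first row of `D` is the intercept `α`, the
remaining rows are the loadings `B`. -/
def recon (Z : Ω → EuclideanSpace ℝ (Fin m)) (τ : Ω → Ω)
    (a : EuclideanSpace ℝ (Fin (k₁ + 1) × Fin m))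
    (D : Matrix (Fin (k₂ + 2)) (Fin m) ℝ) (t : ℕ) (ω : Ω) :
    EuclideanSpace ℝ (Fin m) :=
  (WithLp.equiv 2 (Fin m → ℝ)).symm fun j =>
    D 0 j + ∑ h : Fin (k₂ + 1), D h.succ j * comp m k₁ Z τ a (t - h.1) ω

/-- Population mean squared reconstruction error `MSE₀(a,D)`. -/
def MSE₀ (μ : Measure Ω) (Z : Ω → EuclideanSpace ℝ (Fin m)) (τ : Ω → Ω)
    (a : EuclideanSpace ℝ (Fin (k₁ + 1) × Fin m))
    (D : Matrix (Fin (k₂ + 2)) (Fin m) ℝ) : ℝ :=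
  ∫ ω, ‖zproc m Z τ (k₁ + k₂) ω - recon m k₁ k₂ Z τ a D (k₁ + k₂) ω‖ ^ 2 ∂μ

/-- Sample mean squared reconstruction error `MSE_T(a,D)`. -/
def MSE (Z : Ω → EuclideanSpace ℝ (Fin m)) (τ : Ω → Ω) (T : ℕ)
    (a : EuclideanSpace ℝ (Fin (k₁ + 1) × Fin m))
    (D : Matrix (Fin (k₂ + 2)) (Fin m) ℝ) (ω : Ω) : ℝ :=
  ((T : ℝ) - (k₁ + k₂))⁻¹ *
    ∑ t ∈ Finset.Ioc (k₁ + k₂) T,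
      ‖zproc m Z τ t ω - recon m k₁ k₂ Z τ a D t ω‖ ^ 2

/-- Condition 1: no deterministic linear relation between `f_t(a), …, f_{t-k₂}(a)`
and a constant, uniformly over unit vectors `a`. -/
def Condition1 (μ : Measure Ω) (Z : Ω → EuclideanSpace ℝ (Fin m)) (τ : Ω → Ω) : Prop :=
  ∃ η : ℝ, η < 1 ∧
    ∀ a : EuclideanSpace ℝ (Fin (k₁ + 1) × Fin m), ‖a‖ = 1 →
      ∀ v : Fin (k₂ + 2) → ℝ, v ≠ 0 →
        (μ {ω | ∑ h : Fin (k₂ + 1),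
            v h.castSucc * comp m k₁ Z τ a (k₁ + k₂ - h.1) ω
              = v (Fin.last (k₂ + 1))}).toReal ≤ η

/-- The row `w_t(a) = (1, f_t(a), f_{t-1}(a), …, f_{t-k₂}(a))`. -/
def wvec (Z : Ω → EuclideanSpace ℝ (Fin m)) (τ : Ω → Ω)
    (a : EuclideanSpace ℝ (Fin (k₁ + 1) × Fin m)) (t : ℕ) (i : Fin (k₂ + 2)) (ω : Ω) : ℝ :=
  if i.1 = 0 then 1 else comp m k₁ Z τ a (t - (i.1 - 1)) ω

/-- The population second-moment matrix `S(a) = 𝔼[w_t(a) w_t(a)']`. -/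
def Smat (μ : Measure Ω) (Z : Ω → EuclideanSpace ℝ (Fin m)) (τ : Ω → Ω)
    (a : EuclideanSpace ℝ (Fin (k₁ + 1) × Fin m)) :
    Matrix (Fin (k₂ + 2)) (Fin (k₂ + 2)) ℝ :=
  fun i i' => ∫ ω, wvec m k₁ k₂ Z τ a (k₁ + k₂) i ω * wvec m k₁ k₂ Z τ a (k₁ + k₂) i' ω ∂μ

/-- The sample second-moment matrix `F_{k₁,k₂}(a)'F_{k₁,k₂}(a)/(T-(k₁+k₂))`. -/
def Ssamp (Z : Ω → EuclideanSpace ℝ (Fin m)) (τ : Ω → Ω) (T : ℕ)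
    (a : EuclideanSpace ℝ (Fin (k₁ + 1) × Fin m)) (ω : Ω) :
    Matrix (Fin (k₂ + 2)) (Fin (k₂ + 2)) ℝ :=
  fun i i' => ((T : ℝ) - (k₁ + k₂))⁻¹ *
    ∑ t ∈ Finset.Ioc (k₁ + k₂) T, wvec m k₁ k₂ Z τ a t i ω * wvec m k₁ k₂ Z τ a t i' ω

/-- The set `𝓘` of minimizers of the population MSE. -/
def minimizers (μ : Measure Ω) (Z : Ω → EuclideanSpace ℝ (Fin m)) (τ : Ω → Ω) :
    Set ((EuclideanSpace ℝ (Fin (k₁ + 1) × Fin m)) × Matrix (Fin (k₂ + 2)) (Fin m) ℝ) :=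
  {p | ‖p.1‖ = 1 ∧ ∀ a D, ‖a‖ = 1 → MSE₀ m k₁ k₂ μ Z τ p.1 p.2 ≤ MSE₀ m k₁ k₂ μ Z τ a D}

/-- The distance `d((a,D), 𝓘)`. -/
def distToMinimizers (μ : Measure Ω) (Z : Ω → EuclideanSpace ℝ (Fin m)) (τ : Ω → Ω)
    (a : EuclideanSpace ℝ (Fin (k₁ + 1) × Fin m))
    (D : Matrix (Fin (k₂ + 2)) (Fin m) ℝ) : ℝ :=
  ⨅ p : minimizers m k₁ k₂ μ Z τ, (‖a - p.1.1‖ + frob (D - p.1.2))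


variable (μ : Measure Ω) [IsProbabilityMeasure μ]

private def Qform (Z : Ω → EuclideanSpace ℝ (Fin m)) (τ : Ω → Ω)
    (p : (EuclideanSpace ℝ (Fin (k₁ + 1) × Fin m)) × (EuclideanSpace ℝ (Fin (k₂ + 2)))) : ℝ :=
  ∑ i, ∑ j, p.2 i * Smat m k₁ k₂ μ Z τ p.1 i j * p.2 j

private lemma memℒp_two_integrable_mul {μ : Measure Ω} {f g : Ω → ℝ}
    (hf : MemLp f 2 μ) (hg : MemLp g 2 μ) :
    Integrable (fun ω => f ω * g ω) μ := by
  rw [← memLp_one_iff_integrable]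
  have h : (1 : ENNReal) / 1 = 1 / 2 + 1 / 2 := by
    rw [ENNReal.div_add_div_same, one_div_one, one_add_one_eq_two, ENNReal.div_self two_ne_zero ENNReal.ofNat_ne_top]
  have := hg.smul (φ := f) (r := 1) hf
  exact this

private lemma integral_sum_mul_sum {ι κ : Type*} [Fintype ι] [Fintype κ]
    {μ : Measure Ω} (c : ι → ℝ) (d : κ → ℝ) {f : ι → Ω → ℝ} {g : κ → Ω → ℝ}
    (hf : ∀ i, MemLp (f i) 2 μ) (hg : ∀ j, MemLp (g j) 2 μ) :
    ∫ ω, (∑ i, c i * f i ω) * (∑ j, d j * g j ω) ∂μ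
      = ∑ i, ∑ j, c i * d j * ∫ ω, f i ω * g j ω ∂μ := by
  have h1 : ∀ ω : Ω, (∑ i, c i * f i ω) * (∑ j, d j * g j ω)
      = ∑ i, ∑ j, c i * d j * (f i ω * g j ω) := by
    intro ω
    rw [Finset.sum_mul_sum]
    exact Finset.sum_congr rfl fun i _ => Finset.sum_congr rfl fun j _ => by ring
  simp_rw [h1]
  rw [integral_finset_sum _ (fun i _ =>
    integrable_finset_sum _ fun j _ =>
      ((memℒp_two_integrable_mul (hf i) (hg j)).const_mul _))]
  refine Finset.sum_congr rfl fun i _ => ?_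
  rw [integral_finset_sum _ (fun j _ =>
    ((memℒp_two_integrable_mul (hf i) (hg j)).const_mul _))]
  exact Finset.sum_congr rfl fun j _ => integral_const_mul _ _

set_option maxHeartbeats 2000000 in
theorem stmt15 (hm : 0 < m) (τ : Ω → Ω) (hτ : MeasurePreserving τ μ μ)
    (Z : Ω → EuclideanSpace ℝ (Fin m)) (hZ : MemLp Z 2 μ)
    (hmean : ∫ ω, Z ω ∂μ = 0)
    (hcond : Condition1 m k₁ k₂ μ Z τ) :
    (0 < ⨅ a : { a : EuclideanSpace ℝ (Fin (k₁ + 1) × Fin m) // ‖a‖ = 1 },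
        lambdaMin (Smat m k₁ k₂ μ Z τ a.1)) ∧
    BddAbove (Set.range
      (fun a : { a : EuclideanSpace ℝ (Fin (k₁ + 1) × Fin m) // ‖a‖ = 1 } =>
        lambdaMax (Smat m k₁ k₂ μ Z τ a.1))) := by
  classical
  -- basic membership in L²
  have hZt : ∀ n : ℕ, MemLp (fun ω => Z (τ^[n] ω)) 2 μ :=
    fun n => hZ.comp_measurePreserving (hτ.iterate n)
  have hu : ∀ (n : ℕ) (j : Fin m), MemLp (fun ω => zproc m Z τ n ω j) 2 μ := by
    intro n j
    have := (EuclideanSpace.proj j (𝕜 := ℝ)).comp_memLp' (hZt n)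
    exact this
  have hcomp_eq : ∀ (a : EuclideanSpace ℝ (Fin (k₁ + 1) × Fin m)) (s : ℕ) (ω : Ω),
      comp m k₁ Z τ a s ω
        = ∑ p : Fin (k₁ + 1) × Fin m, a p * zproc m Z τ (s - p.1.1) ω p.2 := by
    intro a s ω
    rw [comp, Fintype.sum_prod_type]
  have hcompmem : ∀ (a : EuclideanSpace ℝ (Fin (k₁ + 1) × Fin m)) (s : ℕ),
      MemLp (fun ω => comp m k₁ Z τ a s ω) 2 μ := by
    intro a s
    simp_rw [hcomp_eq]
    exact memLp_finset_sum _ fun p _ => (hu _ _).const_mul _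
  have hw : ∀ (a : EuclideanSpace ℝ (Fin (k₁ + 1) × Fin m)) (i : Fin (k₂ + 2)),
      MemLp (fun ω => wvec m k₁ k₂ Z τ a (k₁ + k₂) i ω) 2 μ := by
    intro a i
    by_cases hi : (i : ℕ) = 0
    · simp only [wvec, hi, if_true]
      exact memLp_const 1
    · simp only [wvec, hi, if_false]
      exact hcompmem _ _
  -- representation of the entries of S as polynomials in `a`
  let base : Fin (k₂ + 2) → Option (Fin (k₁ + 1) × Fin m) → Ω → ℝ := fun i p ω =>
    Option.rec 1 (fun q => zproc m Z τ (k₁ + k₂ - ((i : ℕ) - 1) - q.1.1) ω q.2) p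
  let coef : Fin (k₂ + 2) → EuclideanSpace ℝ (Fin (k₁ + 1) × Fin m) →
      Option (Fin (k₁ + 1) × Fin m) → ℝ := fun i a p =>
    Option.rec (if (i : ℕ) = 0 then 1 else 0) (fun q => if (i : ℕ) = 0 then 0 else a q) p
  have hbasemem : ∀ i p, MemLp (base i p) 2 μ := by
    rintro i (_ | q)
    · exact memLp_const 1
    · exact hu _ _
  have hwrep : ∀ (i : Fin (k₂ + 2)) (a : EuclideanSpace ℝ (Fin (k₁ + 1) × Fin m)) (ω : Ω),
      wvec m k₁ k₂ Z τ a (k₁ + k₂) i ω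
        = ∑ p : Option (Fin (k₁ + 1) × Fin m), coef i a p * base i p ω := by
    intro i a ω
    rw [Fintype.sum_option]
    by_cases hi : (i : ℕ) = 0
    · simp [wvec, coef, base, hi, Fin.val_eq_zero_iff.mp hi]
    · simp only [wvec, coef, base, hi, if_false, zero_mul, zero_add]
      exact hcomp_eq a _ ω
  have hSentry : ∀ (a : EuclideanSpace ℝ (Fin (k₁ + 1) × Fin m)) (i j : Fin (k₂ + 2)),
      Smat m k₁ k₂ μ Z τ a i j
        = ∑ p : Option (Fin (k₁ + 1) × Fin m), ∑ q : Option (Fin (k₁ + 1) × Fin m),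
            coef i a p * coef j a q * ∫ ω, base i p ω * base j q ω ∂μ := by
    intro a i j
    simp only [Smat]
    simp_rw [hwrep]
    exact integral_sum_mul_sum (coef i a) (coef j a) (hbasemem i) (hbasemem j)
  -- continuity
  have hprojE : ∀ q : Fin (k₁ + 1) × Fin m,
      Continuous fun a : EuclideanSpace ℝ (Fin (k₁ + 1) × Fin m) => a q := by
    intro q
    exact (EuclideanSpace.proj q (𝕜 := ℝ)).continuous
  have hcoefc : ∀ (i : Fin (k₂ + 2)) (p : Option (Fin (k₁ + 1) × Fin m)),
      Continuous fun a : EuclideanSpace ℝ (Fin (k₁ + 1) × Fin m) => coef i a p := by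
    rintro i (_ | q)
    · exact continuous_const
    · by_cases hi : (i : ℕ) = 0
      · simp only [coef, hi, if_true]
        exact continuous_const
      · simp only [coef, hi, if_false]
        exact hprojE q
  have hScont : ∀ i j : Fin (k₂ + 2),
      Continuous fun a : EuclideanSpace ℝ (Fin (k₁ + 1) × Fin m) =>
        Smat m k₁ k₂ μ Z τ a i j := by
    intro i j
    simp_rw [hSentry]
    exact continuous_finset_sum _ fun p _ => continuous_finset_sum _ fun q _ =>
      ((hcoefc i p).mul (hcoefc j q)).mul continuous_const
  -- the quadratic form
  have hprojV : ∀ i : Fin (k₂ + 2),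
      Continuous fun x : EuclideanSpace ℝ (Fin (k₂ + 2)) => x i := by
    intro i
    exact (EuclideanSpace.proj i (𝕜 := ℝ)).continuous
  have hQcont : Continuous (Qform m k₁ k₂ μ Z τ) := by
    unfold Qform
    refine continuous_finset_sum _ fun i _ => continuous_finset_sum _ fun j _ => ?_
    exact (((hprojV i).comp continuous_snd).mul ((hScont i j).comp continuous_fst)).mul
      ((hprojV j).comp continuous_snd)
  have hQeq : ∀ (a : EuclideanSpace ℝ (Fin (k₁ + 1) × Fin m))
      (v : EuclideanSpace ℝ (Fin (k₂ + 2))),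
      Qform m k₁ k₂ μ Z τ (a, v)
        = ∫ ω, (∑ i, v i * wvec m k₁ k₂ Z τ a (k₁ + k₂) i ω) ^ 2 ∂μ := by
    intro a v
    have h1 : Qform m k₁ k₂ μ Z τ (a, v) = ∑ i, ∑ j, v i * v j *
        ∫ ω, wvec m k₁ k₂ Z τ a (k₁ + k₂) i ω * wvec m k₁ k₂ Z τ a (k₁ + k₂) j ω ∂μ := by
      unfold Qform
      dsimp only
      exact Finset.sum_congr rfl fun i _ => Finset.sum_congr rfl fun j _ => by
        simp only [Smat]; ring
    rw [h1, ← integral_sum_mul_sum v v (hw a) (hw a)]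
    simp_rw [sq]
  -- positivity of the quadratic form on the product of spheres
  have hQpos : ∀ (a : EuclideanSpace ℝ (Fin (k₁ + 1) × Fin m))
      (v : EuclideanSpace ℝ (Fin (k₂ + 2))), ‖a‖ = 1 → ‖v‖ = 1 → 0 < Qform m k₁ k₂ μ Z τ (a, v) := by
    intro a v ha hv
    rw [hQeq]
    set g : Ω → ℝ := fun ω => ∑ i, v i * wvec m k₁ k₂ Z τ a (k₁ + k₂) i ω with hg
    have hgmem : MemLp g 2 μ := memLp_finset_sum _ fun i _ => (hw a i).const_mul _
    have hnn : 0 ≤ ∫ ω, g ω ^ 2 ∂μ := integral_nonneg fun ω => sq_nonneg _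
    rcases hnn.lt_or_eq with h | h
    · exact h
    exfalso
    have hzero : ∀ᵐ ω ∂μ, g ω = 0 := by
      have h0 := (integral_eq_zero_iff_of_nonneg
        (fun ω => sq_nonneg (g ω)) hgmem.integrable_sq).mp h.symm
      filter_upwards [h0] with ω hω
      exact (pow_eq_zero_iff two_ne_zero).mp hω
    obtain ⟨η, hη, hC⟩ := hcond
    set v' : Fin (k₂ + 2) → ℝ := Fin.lastCases (-v 0) (fun h => v h.succ) with hv'
    have hv'cast : ∀ h : Fin (k₂ + 1), v' h.castSucc = v h.succ := by
      intro h; simp [hv']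
    have hv'last : v' (Fin.last (k₂ + 1)) = -v 0 := by simp [hv']
    have hv'ne : v' ≠ 0 := by
      intro h0
      have h00 : v 0 = 0 := by
        have := congrFun h0 (Fin.last (k₂ + 1))
        rw [hv'last] at this
        simpa using this
      have hsucc : ∀ h : Fin (k₂ + 1), v h.succ = 0 := by
        intro h
        have := congrFun h0 h.castSucc
        rw [hv'cast] at this
        simpa using this
      have hv0 : v = 0 := by
        ext i
        rcases Fin.eq_zero_or_eq_succ i with rfl | ⟨h, rfl⟩
        · simpa using h00
        · simpa using hsucc h
      rw [hv0] at hv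
      simp at hv
    have hw0 : ∀ ω : Ω, wvec m k₁ k₂ Z τ a (k₁ + k₂) (0 : Fin (k₂ + 2)) ω = 1 := by
      intro ω; simp [wvec]
    have hwsucc : ∀ (h : Fin (k₂ + 1)) (ω : Ω),
        wvec m k₁ k₂ Z τ a (k₁ + k₂) h.succ ω = comp m k₁ Z τ a (k₁ + k₂ - h.1) ω := by
      intro h ω
      simp [wvec, Fin.val_succ]
    set Sset := {ω | ∑ h : Fin (k₂ + 1),
        v' h.castSucc * comp m k₁ Z τ a (k₁ + k₂ - h.1) ω = v' (Fin.last (k₂ + 1))} with hSset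
    have hsub : ∀ᵐ ω ∂μ, ω ∈ Sset := by
      filter_upwards [hzero] with ω hω
      rw [hg] at hω
      simp only at hω
      rw [Fin.sum_univ_succ] at hω
      simp only [hw0, hwsucc, mul_one] at hω
      show ∑ h : Fin (k₂ + 1),
        v' h.castSucc * comp m k₁ Z τ a (k₁ + k₂ - h.1) ω = v' (Fin.last (k₂ + 1))
      simp only [hv'cast, hv'last]
      linarith
    have hSc : μ Ssetᶜ = 0 := ae_iff.mp hsub
    have h1le : (1 : ENNReal) ≤ μ Sset := by
      have hle : μ Set.univ ≤ μ Sset + μ Ssetᶜ := by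
        rw [← Set.union_compl_self Sset]
        exact measure_union_le _ _
      simpa [hSc, measure_univ] using hle
    have hS1 : (μ Sset).toReal = 1 := by
      have h2 : μ Sset ≤ 1 := prob_le_one
      have h3 : μ Sset = 1 := le_antisymm h2 h1le
      simp [h3]
    have hfin := hC a ha v' hv'ne
    rw [hS1] at hfin
    linarith
  -- compactness
  have ha₀ : ‖(EuclideanSpace.single ((0 : Fin (k₁ + 1)), (⟨0, hm⟩ : Fin m)) (1 : ℝ) :
      EuclideanSpace ℝ (Fin (k₁ + 1) × Fin m))‖ = 1 := by
    rw [EuclideanSpace.norm_single]; norm_num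
  have hv₀ : ‖(EuclideanSpace.single (0 : Fin (k₂ + 2)) (1 : ℝ) :
      EuclideanSpace ℝ (Fin (k₂ + 2)))‖ = 1 := by
    rw [EuclideanSpace.norm_single]; norm_num
  set K := (Metric.sphere (0 : EuclideanSpace ℝ (Fin (k₁ + 1) × Fin m)) 1) ×ˢ
    (Metric.sphere (0 : EuclideanSpace ℝ (Fin (k₂ + 2))) 1) with hK
  have hKc : IsCompact K := (isCompact_sphere _ _).prod (isCompact_sphere _ _)
  have hKne : K.Nonempty :=
    ⟨(EuclideanSpace.single ((0 : Fin (k₁ + 1)), (⟨0, hm⟩ : Fin m)) (1 : ℝ),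
      EuclideanSpace.single (0 : Fin (k₂ + 2)) (1 : ℝ)),
     ⟨mem_sphere_zero_iff_norm.mpr ha₀, mem_sphere_zero_iff_norm.mpr hv₀⟩⟩
  obtain ⟨pmin, hpminK, hmin⟩ := hKc.exists_isMinOn hKne hQcont.continuousOn
  obtain ⟨pmax, hpmaxK, hmax⟩ := hKc.exists_isMaxOn hKne hQcont.continuousOn
  have hpmin_pos : 0 < Qform m k₁ k₂ μ Z τ pmin := by
    have h1 := mem_sphere_zero_iff_norm.mp hpminK.1
    have h2 := mem_sphere_zero_iff_norm.mp hpminK.2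
    have := hQpos pmin.1 pmin.2 h1 h2
    simpa using this
  haveI hne1 : Nonempty {a : EuclideanSpace ℝ (Fin (k₁ + 1) × Fin m) // ‖a‖ = 1} :=
    ⟨⟨_, ha₀⟩⟩
  haveI hne2 : Nonempty {x : EuclideanSpace ℝ (Fin (k₂ + 2)) // ‖x‖ = 1} :=
    ⟨⟨_, hv₀⟩⟩
  constructor
  · refine lt_of_lt_of_le hpmin_pos (le_ciInf fun a => ?_)
    rw [lambdaMin]
    refine le_ciInf fun x => ?_
    have hmem : (a.1, x.1) ∈ K :=
      ⟨mem_sphere_zero_iff_norm.mpr a.2, mem_sphere_zero_iff_norm.mpr x.2⟩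
    exact isMinOn_iff.mp hmin _ hmem
  · refine ⟨Qform m k₁ k₂ μ Z τ pmax, fun y hy => ?_⟩
    obtain ⟨a, rfl⟩ := hy
    show lambdaMax (Smat m k₁ k₂ μ Z τ a.1) ≤ Qform m k₁ k₂ μ Z τ pmax
    rw [lambdaMax]
    refine ciSup_le fun x => ?_
    have hmem : (a.1, x.1) ∈ K :=
      ⟨mem_sphere_zero_iff_norm.mpr a.2, mem_sphere_zero_iff_norm.mpr x.2⟩
    exact isMaxOn_iff.mp hmax _ hmem

end ODPC
end
end
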